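/- Let n be odd, V = ℂ^{2n} the symplectic model of Jordan type [n,n] as above, and let W₁ = span(α vₙ + β wₙ) with (α,β) ≠ (0,0). Then the nilpotent endomorphism induced by x on W₁^⊥/W₁ has Jordan type [n−1, n−1]. -/

import Mathlib

open Matrix

set_option maxHeartbeats 4000000
set_option synthInstance.maxHeartbeats 0

/-- The nilpotent endomorphism of Jordan type `[n,n]` on `ℂ^(2n)` (the paper's model). -/
def Xnn (n : ℕ) : Matrix (Fin n ⊕ Fin n) (Fin n ⊕ Fin n) ℂ :=
  Matrix.of fun i j =>
    match i, j with
    | Sum.inl i, Sum.inl j => if (i : ℕ) = (j : ℕ) + 1 then 1 else 0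
    | Sum.inr i, Sum.inr j => if (i : ℕ) = (j : ℕ) + 1 then 1 else 0
    | _, _ => 0

/-- The symplectic form of the `[n,n]` model, as a matrix. -/
def Onn (n : ℕ) : Matrix (Fin n ⊕ Fin n) (Fin n ⊕ Fin n) ℂ :=
  Matrix.of fun i j =>
    match i, j with
    | Sum.inl i, Sum.inr j => if (i : ℕ) + (j : ℕ) = n - 1 then (-1 : ℂ) ^ (i : ℕ) else 0
    | Sum.inr i, Sum.inl j => -(if (j : ℕ) + (i : ℕ) = n - 1 then (-1 : ℂ) ^ (j : ℕ) else 0)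
    | _, _ => 0

/-- The vector `α vₙ + β wₙ` spanning the line `W₁ ⊆ Ker x`. -/
noncomputable def u0 (n : ℕ) (hn : 1 ≤ n) (α β : ℂ) : (Fin n ⊕ Fin n) → ℂ :=
  α • (Pi.single (Sum.inl (⟨n - 1, by omega⟩ : Fin n)) 1 : (Fin n ⊕ Fin n) → ℂ) +
    β • (Pi.single (Sum.inr (⟨n - 1, by omega⟩ : Fin n)) 1 : (Fin n ⊕ Fin n) → ℂ)

/-- The `ω`-orthogonal complement `W₁^⊥` of `W₁ = span(α vₙ + β wₙ)`. -/
noncomputable def Wperp (n : ℕ) (hn : 1 ≤ n) (α β : ℂ) :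
    Submodule ℂ ((Fin n ⊕ Fin n) → ℂ) :=
  LinearMap.ker ((Matrix.toLinearMap₂' ℂ (Onn n)).flip (u0 n hn α β))

/-- The line `W₁`, viewed inside `W₁^⊥`. -/
noncomputable def W1in (n : ℕ) (hn : 1 ≤ n) (α β : ℂ) :
    Submodule ℂ (Wperp n hn α β) :=
  Submodule.comap (Wperp n hn α β).subtype (Submodule.span ℂ {u0 n hn α β})

lemma Xnn_apply_inl (n : ℕ) (w : (Fin n ⊕ Fin n) → ℂ) (i : Fin n) :
    (Xnn n).mulVecLin w (Sum.inl i) =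
      if h : 1 ≤ (i : ℕ) then w (Sum.inl ⟨(i : ℕ) - 1, by omega⟩) else 0 := by
  simp only [mulVecLin_apply, mulVec, dotProduct, Fintype.sum_sum_type]
  have h2 : ∀ j : Fin n, Xnn n (Sum.inl i) (Sum.inr j) * w (Sum.inr j) = 0 := by
    intro j; simp [Xnn]
  rw [Finset.sum_congr rfl (fun j _ => h2 j)]
  simp only [Finset.sum_const_zero, add_zero]
  by_cases h : 1 ≤ (i : ℕ)
  · rw [dif_pos h]
    rw [Finset.sum_congr rfl (fun j (_ : j ∈ Finset.univ) => show
        Xnn n (Sum.inl i) (Sum.inl j) * w (Sum.inl j)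
          = if j = (⟨(i : ℕ) - 1, by omega⟩ : Fin n) then w (Sum.inl j) else 0 by
      by_cases hj : j = (⟨(i : ℕ) - 1, by omega⟩ : Fin n)
      · subst hj; simp [Xnn]; omega
      · rw [if_neg hj]
        have : ¬ ((i : ℕ) = (j : ℕ) + 1) := by
          intro hc; apply hj; apply Fin.ext; simp; omega
        simp [Xnn, this])]
    simp
  · rw [dif_neg h]
    apply Finset.sum_eq_zero
    intro j _
    have : ¬ ((i : ℕ) = (j : ℕ) + 1) := by omega
    simp [Xnn, this]

lemma Xnn_apply_inr (n : ℕ) (w : (Fin n ⊕ Fin n) → ℂ) (i : Fin n) :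
    (Xnn n).mulVecLin w (Sum.inr i) =
      if h : 1 ≤ (i : ℕ) then w (Sum.inr ⟨(i : ℕ) - 1, by omega⟩) else 0 := by
  simp only [mulVecLin_apply, mulVec, dotProduct, Fintype.sum_sum_type]
  have h2 : ∀ j : Fin n, Xnn n (Sum.inr i) (Sum.inl j) * w (Sum.inl j) = 0 := by
    intro j; simp [Xnn]
  rw [Finset.sum_congr rfl (fun j _ => h2 j)]
  simp only [Finset.sum_const_zero, add_zero, zero_add]
  by_cases h : 1 ≤ (i : ℕ)
  · rw [dif_pos h]
    rw [Finset.sum_congr rfl (fun j (_ : j ∈ Finset.univ) => show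
        Xnn n (Sum.inr i) (Sum.inr j) * w (Sum.inr j)
          = if j = (⟨(i : ℕ) - 1, by omega⟩ : Fin n) then w (Sum.inr j) else 0 by
      by_cases hj : j = (⟨(i : ℕ) - 1, by omega⟩ : Fin n)
      · subst hj; simp [Xnn]; omega
      · rw [if_neg hj]
        have : ¬ ((i : ℕ) = (j : ℕ) + 1) := by
          intro hc; apply hj; apply Fin.ext; simp; omega
        simp [Xnn, this])]
    simp
  · rw [dif_neg h]
    apply Finset.sum_eq_zero
    intro j _
    have : ¬ ((i : ℕ) = (j : ℕ) + 1) := by omega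
    simp [Xnn, this]

lemma Xnn_pow_apply_inl (n k : ℕ) (w : (Fin n ⊕ Fin n) → ℂ) (i : Fin n) :
    (((Xnn n).mulVecLin ^ k) w) (Sum.inl i) =
      if h : k ≤ (i : ℕ) then w (Sum.inl ⟨(i : ℕ) - k, by omega⟩) else 0 := by
  induction k generalizing i with
  | zero => simp
  | succ k ih =>
    rw [pow_succ', Module.End.mul_apply, Xnn_apply_inl]
    by_cases h1 : 1 ≤ (i : ℕ)
    · rw [dif_pos h1, ih]
      by_cases h2 : k + 1 ≤ (i : ℕ)
      · rw [dif_pos (by simp; omega), dif_pos h2]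
        congr 2
        apply Fin.ext
        simp
        omega
      · rw [dif_neg (by simp; omega), dif_neg h2]
    · rw [dif_neg h1, dif_neg (by omega)]

lemma Xnn_pow_apply_inr (n k : ℕ) (w : (Fin n ⊕ Fin n) → ℂ) (i : Fin n) :
    (((Xnn n).mulVecLin ^ k) w) (Sum.inr i) =
      if h : k ≤ (i : ℕ) then w (Sum.inr ⟨(i : ℕ) - k, by omega⟩) else 0 := by
  induction k generalizing i with
  | zero => simp
  | succ k ih =>
    rw [pow_succ', Module.End.mul_apply, Xnn_apply_inr]
    by_cases h1 : 1 ≤ (i : ℕ)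
    · rw [dif_pos h1, ih]
      by_cases h2 : k + 1 ≤ (i : ℕ)
      · rw [dif_pos (by simp; omega), dif_pos h2]
        congr 2
        apply Fin.ext
        simp
        omega
      · rw [dif_neg (by simp; omega), dif_neg h2]
    · rw [dif_neg h1, dif_neg (by omega)]

lemma finrank_V (n : ℕ) : Module.finrank ℂ ((Fin n ⊕ Fin n) → ℂ) = 2 * n := by
  simp [Module.finrank_pi]; ring

lemma ker_Xnn_pow (n k : ℕ) (hk : k ≤ n) :
    LinearMap.ker ((Xnn n).mulVecLin ^ k) =
      LinearMap.ker (LinearMap.funLeft ℂ ℂ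
        (Sum.map (Fin.castLE (by omega : n - k ≤ n)) (Fin.castLE (by omega : n - k ≤ n)) :
          Fin (n-k) ⊕ Fin (n-k) → Fin n ⊕ Fin n)) := by
  ext w
  simp only [LinearMap.mem_ker, LinearMap.funLeft_apply]
  constructor
  · intro h
    have h' := congrFun h
    funext j
    cases j with
    | inl j =>
      have := h' (Sum.inl (⟨(j : ℕ) + k, by omega⟩ : Fin n))
      rw [Xnn_pow_apply_inl, dif_pos (by simp)] at this
      simpa using (by convert this using 3; apply Fin.ext; simp; rfl)
    | inr j =>
      have := h' (Sum.inr (⟨(j : ℕ) + k, by omega⟩ : Fin n))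
      rw [Xnn_pow_apply_inr, dif_pos (by simp)] at this
      simpa using (by convert this using 3; apply Fin.ext; simp; rfl)
  · intro h
    funext i
    cases i with
    | inl i =>
      rw [Xnn_pow_apply_inl]
      split
      · next hki =>
        have := congrFun h (Sum.inl ⟨(i:ℕ) - k, by omega⟩)
        simpa using this
      · rfl
    | inr i =>
      rw [Xnn_pow_apply_inr]
      split
      · next hki =>
        have := congrFun h (Sum.inr ⟨(i:ℕ) - k, by omega⟩)
        simpa using this
      · rfl

lemma finrank_ker_Xnn_pow (n k : ℕ) (hk : k ≤ n) :
    Module.finrank ℂ (LinearMap.ker ((Xnn n).mulVecLin ^ k)) = 2 * k := by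
  rw [ker_Xnn_pow n k hk]
  set F := (LinearMap.funLeft ℂ ℂ
        (Sum.map (Fin.castLE (by omega : n - k ≤ n)) (Fin.castLE (by omega : n - k ≤ n)) :
          Fin (n-k) ⊕ Fin (n-k) → Fin n ⊕ Fin n)) with hF
  have hsurj : Function.Surjective F :=
    LinearMap.funLeft_surjective_of_injective ℂ ℂ _
      (Function.Injective.sumMap (Fin.castLE_injective _) (Fin.castLE_injective _))
  have h1 := LinearMap.finrank_range_add_finrank_ker F
  rw [LinearMap.range_eq_top.mpr hsurj] at h1
  rw [finrank_V] at h1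
  have h2 : Module.finrank ℂ (⊤ : Submodule ℂ ((Fin (n-k) ⊕ Fin (n-k)) → ℂ)) = 2 * (n - k) := by
    rw [finrank_top]; exact finrank_V (n-k)
  omega

lemma phi_eq (n : ℕ) (hn : 1 ≤ n) (hodd : Odd n) (α β : ℂ) (w : (Fin n ⊕ Fin n) → ℂ) :
    (Matrix.toLinearMap₂' ℂ (Onn n)).flip (u0 n hn α β) w =
      β * w (Sum.inl ⟨0, hn⟩) - α * w (Sum.inr ⟨0, hn⟩) := by
  rw [LinearMap.flip_apply, Matrix.toLinearMap₂'_apply']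
  have hc : Onn n *ᵥ u0 n hn α β = fun i =>
      match i with
      | Sum.inl i => if (i : ℕ) = 0 then β else 0
      | Sum.inr i => if (i : ℕ) = 0 then -α else 0 := by
    rw [u0, mulVec_add, mulVec_smul, mulVec_smul, mulVec_single]
    funext i
    have hpow : ((-1 : ℂ)) ^ (n - 1) = 1 := by
      apply Even.neg_one_pow
      obtain ⟨m, hm⟩ := hodd
      exact ⟨m, by omega⟩
    cases i with
    | inl i =>
      simp only [Pi.add_apply, Pi.smul_apply, smul_eq_mul, mul_one]
      by_cases h : (i : ℕ) = 0
      · simp [Onn, h, hn]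
      · have : ¬ ((i:ℕ) + (n-1) = n - 1) := by omega
        simp [Onn, this, h]
    | inr i =>
      simp only [Pi.add_apply, Pi.smul_apply, smul_eq_mul, mul_one]
      by_cases h : (i : ℕ) = 0
      · simp [Onn, h, hn, hpow]
      · have : ¬ ((n-1) + (i:ℕ) = n - 1) := by omega
        simp [Onn, this, h]
  rw [hc, dotProduct]
  rw [Fintype.sum_sum_type]
  have e1 : ∀ j : Fin n, w (Sum.inl j) * (if (j : ℕ) = 0 then β else 0)
      = if j = (⟨0, hn⟩ : Fin n) then w (Sum.inl j) * β else 0 := by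
    intro j; by_cases h : j = (⟨0, hn⟩ : Fin n)
    · subst h; simp
    · have : ¬ ((j:ℕ) = 0) := fun hc => h (Fin.ext hc)
      simp [this, h]
  have e2 : ∀ j : Fin n, w (Sum.inr j) * (if (j : ℕ) = 0 then -α else 0)
      = if j = (⟨0, hn⟩ : Fin n) then w (Sum.inr j) * (-α) else 0 := by
    intro j; by_cases h : j = (⟨0, hn⟩ : Fin n)
    · subst h; simp
    · have : ¬ ((j:ℕ) = 0) := fun hc => h (Fin.ext hc)
      simp [this, h]
  rw [Finset.sum_congr rfl (fun j _ => e1 j), Finset.sum_congr rfl (fun j _ => e2 j)]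
  rw [Finset.sum_ite_eq' Finset.univ, Finset.sum_ite_eq' Finset.univ]
  simp
  ring

lemma u0_apply_inl (n : ℕ) (hn : 1 ≤ n) (α β : ℂ) (j : Fin n) :
    u0 n hn α β (Sum.inl j) = if (j : ℕ) = n - 1 then α else 0 := by
  rw [u0]
  by_cases h : (j : ℕ) = n - 1 <;>
    simp [Pi.single_apply, Fin.ext_iff, h]

lemma u0_apply_inr (n : ℕ) (hn : 1 ≤ n) (α β : ℂ) (j : Fin n) :
    u0 n hn α β (Sum.inr j) = if (j : ℕ) = n - 1 then β else 0 := by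
  rw [u0]
  by_cases h : (j : ℕ) = n - 1 <;>
    simp [Pi.single_apply, Fin.ext_iff, h]

lemma u0_mem_range (n : ℕ) (hn : 1 ≤ n) (α β : ℂ) (k : ℕ) (hk : k ≤ n - 1) :
    u0 n hn α β ∈ LinearMap.range ((Xnn n).mulVecLin ^ k) := by
  refine ⟨α • (Pi.single (Sum.inl (⟨n - 1 - k, by omega⟩ : Fin n)) 1 :
      (Fin n ⊕ Fin n) → ℂ) +
    β • (Pi.single (Sum.inr (⟨n - 1 - k, by omega⟩ : Fin n)) 1 : (Fin n ⊕ Fin n) → ℂ), ?_⟩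
  funext i
  cases i with
  | inl i =>
    rw [Xnn_pow_apply_inl, u0_apply_inl]
    by_cases h : k ≤ (i : ℕ)
    · rw [dif_pos h]
      by_cases h2 : (i : ℕ) = n - 1
      · have h3 : (i : ℕ) - k = n - 1 - k := by omega
        simp [Pi.single_apply, Fin.ext_iff, h2, h3]
      · have h3 : ¬ ((i : ℕ) - k = n - 1 - k) := by omega
        simp [Pi.single_apply, Fin.ext_iff, h2, h3]
    · rw [dif_neg h, if_neg (by omega)]
  | inr i =>
    rw [Xnn_pow_apply_inr, u0_apply_inr]
    by_cases h : k ≤ (i : ℕ)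
    · rw [dif_pos h]
      by_cases h2 : (i : ℕ) = n - 1
      · have h3 : (i : ℕ) - k = n - 1 - k := by omega
        simp [Pi.single_apply, Fin.ext_iff, h2, h3]
      · have h3 : ¬ ((i : ℕ) - k = n - 1 - k) := by omega
        simp [Pi.single_apply, Fin.ext_iff, h2, h3]
    · rw [dif_neg h, if_neg (by omega)]

lemma Xnn_pow_apply_inl' (n k : ℕ) (w : (Fin n ⊕ Fin n) → ℂ) (i : Fin n) (h : k ≤ (i : ℕ))
    (j : Fin n) (hj : (j : ℕ) = (i : ℕ) - k) :
    (((Xnn n).mulVecLin ^ k) w) (Sum.inl i) = w (Sum.inl j) := by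
  rw [Xnn_pow_apply_inl, dif_pos h]
  congr 1; congr 1; apply Fin.ext; simp [hj]

lemma Xnn_pow_apply_inr' (n k : ℕ) (w : (Fin n ⊕ Fin n) → ℂ) (i : Fin n) (h : k ≤ (i : ℕ))
    (j : Fin n) (hj : (j : ℕ) = (i : ℕ) - k) :
    (((Xnn n).mulVecLin ^ k) w) (Sum.inr i) = w (Sum.inr j) := by
  rw [Xnn_pow_apply_inr, dif_pos h]
  congr 1; congr 1; apply Fin.ext; simp [hj]

lemma finrank_map_add_aux {M N : Type*} [AddCommGroup M] [Module ℂ M] [AddCommGroup N]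
    [Module ℂ N] [FiniteDimensional ℂ M] (f : M →ₗ[ℂ] N) (S : Submodule ℂ M) :
    Module.finrank ℂ (Submodule.map f S) +
      Module.finrank ℂ (Submodule.comap S.subtype (LinearMap.ker f)) =
      Module.finrank ℂ S := by
  have h := LinearMap.finrank_range_add_finrank_ker (f.domRestrict S)
  rwa [LinearMap.range_domRestrict, LinearMap.ker_domRestrict] at h

lemma finrank_map_add_aux' {M N : Type*} [AddCommGroup M] [Module ℂ M] [AddCommGroup N]
    [Module ℂ N] [FiniteDimensional ℂ M] (f : M →ₗ[ℂ] N) (S : Submodule ℂ M)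
    (h : LinearMap.ker f ≤ S) :
    Module.finrank ℂ (Submodule.map f S) + Module.finrank ℂ (LinearMap.ker f) =
      Module.finrank ℂ S := by
  have h0 := finrank_map_add_aux f S
  rwa [← Submodule.finrank_map_subtype_eq S (Submodule.comap S.subtype (LinearMap.ker f)),
    Submodule.map_comap_subtype, inf_eq_right.mpr h] at h0

theorem induced_jordan_type_odd (n : ℕ) (hn : 1 ≤ n) (hodd : Odd n)
    (α β : ℂ) (hαβ : ¬(α = 0 ∧ β = 0))
    (hstab : ∀ u ∈ Wperp n hn α β, (Xnn n).mulVecLin u ∈ Wperp n hn α β)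
    (hmap : W1in n hn α β ≤
      (W1in n hn α β).comap ((Xnn n).mulVecLin.restrict hstab)) :
    ∀ k : ℕ,
      Module.finrank ℂ
        (LinearMap.ker
          ((Submodule.mapQ (W1in n hn α β) (W1in n hn α β)
              ((Xnn n).mulVecLin.restrict hstab) hmap) ^ k)) =
        min (2 * k) (2 * (n - 1)) := by
  set f := (Xnn n).mulVecLin with hf
  set W := Wperp n hn α β with hW
  set L : Submodule ℂ ((Fin n ⊕ Fin n) → ℂ) := Submodule.span ℂ {u0 n hn α β} with hL
  set p := W1in n hn α β with hp
  set g := f.restrict hstab with hg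
  set φ : ((Fin n ⊕ Fin n) → ℂ) →ₗ[ℂ] ℂ := (Matrix.toLinearMap₂' ℂ (Onn n)).flip (u0 n hn α β) with hφ
  -- u0 ≠ 0
  have hu0ne : u0 n hn α β ≠ 0 := by
    intro h
    apply hαβ
    constructor
    · have := congrFun h (Sum.inl ⟨n - 1, by omega⟩)
      rwa [u0_apply_inl, if_pos rfl] at this
    · have := congrFun h (Sum.inr ⟨n - 1, by omega⟩)
      rwa [u0_apply_inr, if_pos rfl] at this
  -- u0 ∈ W
  have hu0W : u0 n hn α β ∈ W := by
    rw [hW, Wperp, LinearMap.mem_ker, ← hφ, phi_eq n hn hodd]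
    rw [u0_apply_inl, u0_apply_inr]
    by_cases h1 : (0 : ℕ) = n - 1
    · rw [if_pos h1, if_pos h1]; ring
    · rw [if_neg h1, if_neg h1]; ring
  have hLW : L ≤ W := by
    rw [hL, Submodule.span_le, Set.singleton_subset_iff]; exact hu0W
  -- finrank W = 2n - 1
  have hWrank : Module.finrank ℂ W = 2 * n - 1 := by
    have hsurj : Function.Surjective φ := by
      obtain ⟨x, hx⟩ : ∃ x, φ x ≠ 0 := by
        by_cases hβ : β = 0
        · have hα : α ≠ 0 := fun h => hαβ ⟨h, hβ⟩
          refine ⟨Pi.single (Sum.inr (⟨0, hn⟩ : Fin n)) 1, ?_⟩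
          rw [hφ, phi_eq n hn hodd]
          simp [Pi.single_apply, hα, hβ]
        · refine ⟨Pi.single (Sum.inl (⟨0, hn⟩ : Fin n)) 1, ?_⟩
          rw [hφ, phi_eq n hn hodd]
          simp [Pi.single_apply, hβ]
      intro c
      refine ⟨(c * (φ x)⁻¹) • x, ?_⟩
      rw [LinearMap.map_smul, smul_eq_mul, mul_assoc, inv_mul_cancel₀ hx, mul_one]
    have h1 := LinearMap.finrank_range_add_finrank_ker φ
    rw [LinearMap.range_eq_top.mpr hsurj, finrank_top, Module.finrank_self, finrank_V] at h1
    have : W = LinearMap.ker φ := by rw [hW, Wperp, hφ]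
    rw [this]
    omega
  -- finrank L = 1, finrank p = 1
  have hLrank : Module.finrank ℂ L = 1 := finrank_span_singleton hu0ne
  have hprank : Module.finrank ℂ p = 1 := by
    have e : Module.finrank ℂ (Submodule.comap W.subtype L) = Module.finrank ℂ L :=
      (Submodule.comapSubtypeEquivOfLe hLW).finrank_eq
    rw [hLrank] at e
    exact e
  -- key computation for k ≤ n - 1
  have key : ∀ k : ℕ, k ≤ n - 1 →
      Module.finrank ℂ (LinearMap.ker ((Submodule.mapQ p p g hmap) ^ k)) = 2 * k := by
    intro k hk
    -- D := comap (f^k) L, D ≤ W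
    set D := Submodule.comap (f ^ k) L with hD
    have hDW : D ≤ W := by
      intro w hw
      rw [hD, Submodule.mem_comap, hL, Submodule.mem_span_singleton] at hw
      obtain ⟨c, hc⟩ := hw
      rw [hW, Wperp, LinearMap.mem_ker, ← hφ, phi_eq n hn hodd]
      have h1 := congrFun hc.symm (Sum.inl (⟨k, by omega⟩ : Fin n))
      have h2 := congrFun hc.symm (Sum.inr (⟨k, by omega⟩ : Fin n))
      rw [Pi.smul_apply, u0_apply_inl, smul_eq_mul,
        Xnn_pow_apply_inl' n k w ⟨k, by omega⟩ (by simp) ⟨0, hn⟩ (by simp)] at h1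
      rw [Pi.smul_apply, u0_apply_inr, smul_eq_mul,
        Xnn_pow_apply_inr' n k w ⟨k, by omega⟩ (by simp) ⟨0, hn⟩ (by simp)] at h2
      rw [h1, h2]
      split_ifs <;> ring
    -- finrank D = 2k + 1
    have hDrank : Module.finrank ℂ D = 2 * k + 1 := by
      have hkerle : LinearMap.ker (f ^ k) ≤ D := by
        intro w hw
        rw [hD, Submodule.mem_comap]
        rw [LinearMap.mem_ker] at hw
        rw [hw]; exact L.zero_mem
      have hbk := finrank_map_add_aux' (f ^ k) D hkerle
      have hmapD : Submodule.map (f ^ k) D = L := by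
        rw [hD, Submodule.map_comap_eq, inf_eq_right.mpr]
        rw [hL, Submodule.span_le, Set.singleton_subset_iff]
        exact u0_mem_range n hn α β k hk
      have e4 := finrank_ker_Xnn_pow n k (by omega)
      rw [← hf] at e4
      rw [hmapD] at hbk
      omega
    -- y^k = mapQ (g^k)
    rw [← Submodule.mapQ_pow]
    -- ker = map mkQ (comap (g^k) p)
    set S := Submodule.comap (g ^ k) p with hS
    have hpS : p ≤ S := Submodule.le_comap_pow_of_le_comap p hmap k
    have hker : LinearMap.ker (Submodule.mapQ p p (g ^ k)
        (Submodule.le_comap_pow_of_le_comap p hmap k)) = Submodule.map p.mkQ S := by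
      have h1 : Submodule.map p.mkQ (Submodule.comap p.mkQ
          (LinearMap.ker (Submodule.mapQ p p (g ^ k)
            (Submodule.le_comap_pow_of_le_comap p hmap k)))) =
          LinearMap.ker (Submodule.mapQ p p (g ^ k)
            (Submodule.le_comap_pow_of_le_comap p hmap k)) := by
        rw [Submodule.map_comap_eq, Submodule.range_mkQ, top_inf_eq]
      rw [← h1, ← LinearMap.ker_comp, Submodule.mapQ_mkQ, LinearMap.ker_comp,
        Submodule.ker_mkQ, ← hS]
    rw [hker]
    -- S ≅ D
    have hSD : Module.finrank ℂ S = 2 * k + 1 := by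
      have hSeq : S = Submodule.comap W.subtype D := by
        rw [hS, hg, Module.End.pow_restrict]
        ext x
        simp [Submodule.mem_comap, LinearMap.restrict_apply, W1in, hD, hL, hp]
      have e5 : Module.finrank ℂ (Submodule.comap W.subtype D) = Module.finrank ℂ D :=
        (Submodule.comapSubtypeEquivOfLe hDW).finrank_eq
      rw [hSeq, e5]
      exact hDrank
    have hbk2 := finrank_map_add_aux' p.mkQ S (by rw [Submodule.ker_mkQ]; exact hpS)
    rw [Submodule.ker_mkQ, hprank, hSD] at hbk2
    omega
  -- conclude
  intro k
  rcases le_or_gt k (n - 1) with hk | hk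
  · rw [key k hk]
    omega
  · -- k > n-1 : the (n-1)-st power already kills everything
    have hQrank : Module.finrank ℂ ((Wperp n hn α β) ⧸ p) = 2 * (n - 1) := by
      have := Submodule.finrank_quotient_add_finrank p
      rw [hprank, hWrank] at this
      omega
    have htop : LinearMap.ker ((Submodule.mapQ p p g hmap) ^ (n - 1)) = ⊤ := by
      apply Submodule.eq_top_of_finrank_eq
      rw [key (n - 1) le_rfl, hQrank]
    have hzero : (Submodule.mapQ p p g hmap) ^ (n - 1) = 0 := LinearMap.ker_eq_top.mp htop
    have hzk : (Submodule.mapQ p p g hmap) ^ k = 0 := by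
      have : k = (n - 1) + (k - (n - 1)) := by omega
      rw [this, pow_add, hzero, zero_mul]
    rw [hzk, LinearMap.ker_zero, finrank_top, hQrank]
    omega
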